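/- Let G=(V,E,W) be a finite graph with symmetric weights and θ: ℝ² → ℝ a C¹ function with θ(a,b)=θ(b,a); write θ_ij(ρ) = θ(ρ_i,ρ_j). Let (ρ(t),S(t)) be a C¹ solution on an interval of the discrete Wasserstein–Hamiltonian flow ρ̇_i = −Σ_{j∈N(i)} w_ij (S_j − S_i) θ_ij(ρ), Ṡ_i = −(1/2) Σ_{j∈N(i)} w_ij (S_i − S_j)² ∂θ_ij(ρ)/∂ρ_i. Then both the total mass Σ_{i∈V} ρ_i(t) and the Hamiltonian ℋ(ρ(t),S(t)) = (1/4) Σ_{(i,j)∈E} (S_i(t) − S_j(t))² θ_ij(ρ(t)) w_ij (sum over ordered pairs of adjacent vertices) are constant in t. -/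

import Mathlib

open Finset

lemma whc_const_of_deriv_zero {f : ℝ → ℝ} {a b : ℝ}
    (h : ∀ t ∈ Set.Ioo a b, HasDerivAt f 0 t) :
    ∀ s ∈ Set.Ioo a b, ∀ t ∈ Set.Ioo a b, f s = f t := by
  have key : ∀ s ∈ Set.Ioo a b, ∀ t ∈ Set.Ioo a b, s ≤ t → f t = f s := by
    intro s hs t ht hst
    have hsub : Set.Icc s t ⊆ Set.Ioo a b := fun x hx =>
      ⟨lt_of_lt_of_le hs.1 hx.1, lt_of_le_of_lt hx.2 ht.2⟩
    have hcont : ContinuousOn f (Set.Icc s t) := fun x hx =>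
      ((h x (hsub hx)).continuousAt).continuousWithinAt
    exact constant_of_has_deriv_right_zero hcont
      (fun x hx => ((h x (hsub ⟨hx.1, le_of_lt hx.2⟩)).hasDerivWithinAt)) t
      ⟨hst, le_rfl⟩
  intro s hs t ht
  rcases le_total s t with hst | hst
  · exact (key s hs t ht hst).symm
  · exact key t ht s hs hst

lemma whc_swap {N : ℕ} (G : SimpleGraph (Fin N)) [DecidableRel G.Adj]
    (f : Fin N → Fin N → ℝ) :
    ∑ i, ∑ j ∈ G.neighborFinset i, f i j = ∑ i, ∑ j ∈ G.neighborFinset i, f j i := by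
  have h : ∀ (g : Fin N → Fin N → ℝ),
      ∑ i, ∑ j ∈ G.neighborFinset i, g i j
        = ∑ i : Fin N, ∑ j : Fin N, if G.Adj i j then g i j else 0 := by
    intro g
    refine Finset.sum_congr rfl fun i _ => ?_
    rw [SimpleGraph.neighborFinset_eq_filter, Finset.sum_filter]
  rw [h, h, Finset.sum_comm]
  refine Finset.sum_congr rfl fun i _ => Finset.sum_congr rfl fun j _ => ?_
  exact if_congr (G.adj_comm j i) rfl rfl

lemma whc_chain (θ θ₁ : ℝ → ℝ → ℝ)
    (hθC1 : ContDiff ℝ 1 (fun p : ℝ × ℝ => θ p.1 p.2))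
    (hθ_symm : ∀ a b, θ a b = θ b a)
    (hθ₁ : ∀ a b, HasDerivAt (fun x => θ x b) (θ₁ a b) a)
    {c d : ℝ → ℝ} {c' d' t : ℝ}
    (hc : HasDerivAt c c' t) (hd : HasDerivAt d d' t) :
    HasDerivAt (fun τ => θ (c τ) (d τ))
      (θ₁ (c t) (d t) * c' + θ₁ (d t) (c t) * d') t := by
  set f : ℝ × ℝ → ℝ := fun p => θ p.1 p.2 with hf
  have hdf : HasFDerivAt f (fderiv ℝ f (c t, d t)) (c t, d t) :=
    ((hθC1.differentiable one_ne_zero) (c t, d t)).hasFDerivAt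
  set L := fderiv ℝ f (c t, d t) with hL
  have hcd : HasDerivAt (fun τ => (c τ, d τ)) (c', d') t := hc.prodMk hd
  have hcomp : HasDerivAt (fun τ => f (c τ, d τ)) (L (c', d')) t :=
    hdf.comp_hasDerivAt (f := fun τ => (c τ, d τ)) t hcd
  have h10 : L ((1 : ℝ), (0 : ℝ)) = θ₁ (c t) (d t) := by
    have hline : HasDerivAt (fun x : ℝ => (x, d t)) ((1:ℝ), (0:ℝ)) (c t) :=
      (hasDerivAt_id (c t)).prodMk (hasDerivAt_const (c t) (d t))
    have h2 : HasDerivAt (fun x : ℝ => f (x, d t)) (L (1, 0)) (c t) :=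
      hdf.comp_hasDerivAt (f := fun x : ℝ => (x, d t)) (c t) hline
    exact h2.unique (hθ₁ (c t) (d t))
  have h01 : L ((0 : ℝ), (1 : ℝ)) = θ₁ (d t) (c t) := by
    have hline : HasDerivAt (fun y : ℝ => (c t, y)) ((0:ℝ), (1:ℝ)) (d t) :=
      (hasDerivAt_const (d t) (c t)).prodMk (hasDerivAt_id (d t))
    have h2 : HasDerivAt (fun y : ℝ => f (c t, y)) (L (0, 1)) (d t) :=
      hdf.comp_hasDerivAt (d t) hline
    have h3 : HasDerivAt (fun y => θ y (c t)) (θ₁ (d t) (c t)) (d t) := hθ₁ (d t) (c t)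
    have h4 : (fun y => θ y (c t)) = fun y => θ (c t) y := by
      funext y; exact hθ_symm y (c t)
    rw [h4] at h3
    exact h2.unique h3
  have hdecomp : L (c', d') = θ₁ (c t) (d t) * c' + θ₁ (d t) (c t) * d' := by
    have hv : ((c', d') : ℝ × ℝ) = c' • ((1:ℝ), (0:ℝ)) + d' • ((0:ℝ), (1:ℝ)) := by
      simp [Prod.ext_iff]
    rw [hv, map_add, map_smul, map_smul, h10, h01, smul_eq_mul, smul_eq_mul]
    ring
  rw [← hdecomp]
  exact hcomp

lemma whc_key {N : ℕ} (G : SimpleGraph (Fin N)) [DecidableRel G.Adj]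
    (w : Fin N → Fin N → ℝ) (hw_symm : ∀ i j, w i j = w j i)
    (θv θ₁v : Fin N → Fin N → ℝ)
    (hθv : ∀ i j, θv i j = θv j i)
    (u p q : Fin N → ℝ)
    (hp : ∀ i, p i = ∑ j ∈ G.neighborFinset i, w i j * (u i - u j) * θv i j)
    (hq : ∀ i, q i = -(1/2) * ∑ j ∈ G.neighborFinset i, w i j * (u i - u j)^2 * θ₁v i j) :
    ∑ i, ∑ j ∈ G.neighborFinset i,
      (2 * (u i - u j) * (q i - q j) * θv i j
        + (u i - u j)^2 * (θ₁v i j * p i + θ₁v j i * p j)) * w i j = 0 := by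
  set A1 : Fin N → Fin N → ℝ := fun i j => 2 * (u i - u j) * q i * θv i j * w i j with hA1def
  set A2 : Fin N → Fin N → ℝ := fun i j => -(2 * (u i - u j) * q j * θv i j * w i j) with hA2def
  set A3 : Fin N → Fin N → ℝ := fun i j => (u i - u j)^2 * θ₁v i j * p i * w i j with hA3def
  set A4 : Fin N → Fin N → ℝ := fun i j => (u i - u j)^2 * θ₁v j i * p j * w i j with hA4def
  have hsplit : ∑ i, ∑ j ∈ G.neighborFinset i,
      (2 * (u i - u j) * (q i - q j) * θv i j
        + (u i - u j)^2 * (θ₁v i j * p i + θ₁v j i * p j)) * w i j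
      = (∑ i, ∑ j ∈ G.neighborFinset i, A1 i j)
        + (∑ i, ∑ j ∈ G.neighborFinset i, A2 i j)
        + (∑ i, ∑ j ∈ G.neighborFinset i, A3 i j)
        + (∑ i, ∑ j ∈ G.neighborFinset i, A4 i j) := by
    rw [← Finset.sum_add_distrib, ← Finset.sum_add_distrib, ← Finset.sum_add_distrib]
    refine Finset.sum_congr rfl fun i _ => ?_
    rw [← Finset.sum_add_distrib, ← Finset.sum_add_distrib, ← Finset.sum_add_distrib]
    refine Finset.sum_congr rfl fun j _ => ?_
    simp only [hA1def, hA2def, hA3def, hA4def]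
    ring
  have hA2 : ∑ i, ∑ j ∈ G.neighborFinset i, A2 i j
      = ∑ i, ∑ j ∈ G.neighborFinset i, A1 i j := by
    rw [whc_swap G A2]
    refine Finset.sum_congr rfl fun i _ => Finset.sum_congr rfl fun j _ => ?_
    simp only [hA1def, hA2def]
    rw [hθv j i, ← hw_symm i j]
    ring
  have hA4 : ∑ i, ∑ j ∈ G.neighborFinset i, A4 i j
      = ∑ i, ∑ j ∈ G.neighborFinset i, A3 i j := by
    rw [whc_swap G A4]
    refine Finset.sum_congr rfl fun i _ => Finset.sum_congr rfl fun j _ => ?_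
    simp only [hA3def, hA4def]
    rw [← hw_symm i j]
    ring
  have e1 : ∑ i, ∑ j ∈ G.neighborFinset i, A1 i j = ∑ i, 2 * q i * p i := by
    refine Finset.sum_congr rfl fun i _ => ?_
    calc ∑ j ∈ G.neighborFinset i, A1 i j
        = ∑ j ∈ G.neighborFinset i, (2 * q i) * (w i j * (u i - u j) * θv i j) := by
          refine Finset.sum_congr rfl fun j _ => ?_
          simp only [hA1def]; ring
      _ = (2 * q i) * ∑ j ∈ G.neighborFinset i, (w i j * (u i - u j) * θv i j) :=
          (Finset.mul_sum _ _ _).symm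
      _ = 2 * q i * p i := by rw [← hp i]
  have e3 : ∑ i, ∑ j ∈ G.neighborFinset i, A3 i j = ∑ i, p i * (-2 * q i) := by
    refine Finset.sum_congr rfl fun i _ => ?_
    have hT : ∑ j ∈ G.neighborFinset i, w i j * (u i - u j)^2 * θ₁v i j = -2 * q i := by
      rw [hq i]; ring
    calc ∑ j ∈ G.neighborFinset i, A3 i j
        = ∑ j ∈ G.neighborFinset i, (p i) * (w i j * (u i - u j)^2 * θ₁v i j) := by
          refine Finset.sum_congr rfl fun j _ => ?_
          simp only [hA3def]; ring
      _ = p i * ∑ j ∈ G.neighborFinset i, (w i j * (u i - u j)^2 * θ₁v i j) :=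
          (Finset.mul_sum _ _ _).symm
      _ = p i * (-2 * q i) := by rw [hT]
  have e13 : ∑ i, 2 * q i * p i + ∑ i, p i * (-2 * q i) = 0 := by
    rw [← Finset.sum_add_distrib]
    exact Finset.sum_eq_zero fun i _ => by ring
  rw [hsplit, hA2, hA4, e1, e3]
  linarith

/-- Along any C¹ solution of the discrete Wasserstein–Hamiltonian flow on a
finite weighted graph (with symmetric C¹ density weight `θ`), both the total mass
`Σ_i ρ_i(t)` and the Hamiltonian `ℋ(ρ,S) = (1/4) Σ_{(i,j)∈E} (S_i − S_j)² θ_ij(ρ) w_ij`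
are constant in time. -/
theorem wasserstein_hamiltonian_conservation {N : ℕ}
    (G : SimpleGraph (Fin N)) [DecidableRel G.Adj]
    (w : Fin N → Fin N → ℝ)
    (hw_symm : ∀ i j, w i j = w j i)
    (hw_pos : ∀ i j, G.Adj i j → 0 < w i j)
    (θ θ₁ : ℝ → ℝ → ℝ)
    (hθC1 : ContDiff ℝ 1 (fun p : ℝ × ℝ => θ p.1 p.2))
    (hθ_symm : ∀ a b, θ a b = θ b a)
    (hθ₁ : ∀ a b, HasDerivAt (fun x => θ x b) (θ₁ a b) a)
    (a b : ℝ)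
    (ρ S : ℝ → Fin N → ℝ)
    (hρ : ∀ t ∈ Set.Ioo a b, ∀ i, HasDerivAt (fun τ => ρ τ i)
        (- ∑ j ∈ G.neighborFinset i, w i j * (S t j - S t i) * θ (ρ t i) (ρ t j)) t)
    (hS : ∀ t ∈ Set.Ioo a b, ∀ i, HasDerivAt (fun τ => S τ i)
        (- (1/2) * ∑ j ∈ G.neighborFinset i, w i j * (S t i - S t j)^2 * θ₁ (ρ t i) (ρ t j)) t) :
    (∀ s ∈ Set.Ioo a b, ∀ t ∈ Set.Ioo a b, ∑ i, ρ s i = ∑ i, ρ t i) ∧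
    (∀ s ∈ Set.Ioo a b, ∀ t ∈ Set.Ioo a b,
      (1/4) * ∑ i, ∑ j ∈ G.neighborFinset i, (S s i - S s j)^2 * θ (ρ s i) (ρ s j) * w i j
        = (1/4) * ∑ i, ∑ j ∈ G.neighborFinset i,
            (S t i - S t j)^2 * θ (ρ t i) (ρ t j) * w i j) := by
  constructor
  · -- mass conservation
    have hF : ∀ t ∈ Set.Ioo a b, HasDerivAt (fun τ => ∑ i, ρ τ i) 0 t := by
      intro t ht
      have h := HasDerivAt.fun_sum (fun i (_ : i ∈ Finset.univ) => hρ t ht i)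
      have hz : (∑ i : Fin N, - ∑ j ∈ G.neighborFinset i,
          w i j * (S t j - S t i) * θ (ρ t i) (ρ t j)) = 0 := by
        have hanti : ∑ i, ∑ j ∈ G.neighborFinset i,
            w i j * (S t j - S t i) * θ (ρ t i) (ρ t j) = 0 := by
          have hsw := whc_swap G (fun i j => w i j * (S t j - S t i) * θ (ρ t i) (ρ t j))
          have hneg : ∑ i, ∑ j ∈ G.neighborFinset i,
              w j i * (S t i - S t j) * θ (ρ t j) (ρ t i)
              = - ∑ i, ∑ j ∈ G.neighborFinset i,
                  w i j * (S t j - S t i) * θ (ρ t i) (ρ t j) := by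
            rw [← Finset.sum_neg_distrib]
            refine Finset.sum_congr rfl fun i _ => ?_
            rw [← Finset.sum_neg_distrib]
            refine Finset.sum_congr rfl fun j _ => ?_
            rw [← hw_symm i j, hθ_symm (ρ t j) (ρ t i)]
            ring
          rw [hneg] at hsw
          linarith
        rw [Finset.sum_neg_distrib, hanti, neg_zero]
      rwa [hz] at h
    intro s hs t ht
    exact whc_const_of_deriv_zero hF s hs t ht
  · -- Hamiltonian conservation
    have hH : ∀ t ∈ Set.Ioo a b, HasDerivAt (fun τ => (1/4) * ∑ i, ∑ j ∈ G.neighborFinset i,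
        (S τ i - S τ j)^2 * θ (ρ τ i) (ρ τ j) * w i j) 0 t := by
      intro t ht
      set p : Fin N → ℝ := fun i => - ∑ j ∈ G.neighborFinset i,
        w i j * (S t j - S t i) * θ (ρ t i) (ρ t j) with hpdef
      set q : Fin N → ℝ := fun i => - (1/2) * ∑ j ∈ G.neighborFinset i,
        w i j * (S t i - S t j)^2 * θ₁ (ρ t i) (ρ t j) with hqdef
      set D : Fin N → Fin N → ℝ := fun i j =>
        (2 * (S t i - S t j) * (q i - q j) * θ (ρ t i) (ρ t j)
          + (S t i - S t j)^2 * (θ₁ (ρ t i) (ρ t j) * p i + θ₁ (ρ t j) (ρ t i) * p j)) * w i j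
        with hDdef
      have hterm : ∀ i j, HasDerivAt
          (fun τ => (S τ i - S τ j)^2 * θ (ρ τ i) (ρ τ j) * w i j) (D i j) t := by
        intro i j
        have h1 : HasDerivAt (fun τ => S τ i - S τ j) (q i - q j) t :=
          (hS t ht i).sub (hS t ht j)
        have h2 := h1.fun_pow 2
        have h3 := whc_chain θ θ₁ hθC1 hθ_symm hθ₁ (hρ t ht i) (hρ t ht j)
        have h4 := (h2.fun_mul h3).mul_const (w i j)
        refine h4.congr_deriv ?_
        simp only [hDdef]
        push_cast
        ring
      have hDsum : (1/4) * ∑ i, ∑ j ∈ G.neighborFinset i, D i j = 0 := by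
        have hkey := whc_key G w hw_symm
          (fun i j => θ (ρ t i) (ρ t j)) (fun i j => θ₁ (ρ t i) (ρ t j))
          (fun i j => hθ_symm (ρ t i) (ρ t j)) (S t) p q
          (fun i => by
            rw [hpdef]
            simp only
            rw [← Finset.sum_neg_distrib]
            exact Finset.sum_congr rfl fun j _ => by ring)
          (fun i => by rw [hqdef])
        simp only [hDdef]
        rw [hkey]
        ring
      have h := (HasDerivAt.fun_sum (fun i (_ : i ∈ Finset.univ) =>
        HasDerivAt.fun_sum (fun j (_ : j ∈ G.neighborFinset i) => hterm i j))).const_mul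
        ((1:ℝ)/4)
      rwa [hDsum] at h
    intro s hs t ht
    exact whc_const_of_deriv_zero hH s hs t ht
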